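/- Let d ≥ 2 be an integer, A, B ∈ ℚ[X] nonzero coprime polynomials of degrees r_a, r_b with leading coefficients α, β, and let f ∈ ℚ((z^{−1})) be a non-rational formal Laurent series satisfying B(z)f(z) = A(z)f(z^d). Let p_k/q_k be a convergent of f with d_k = deg q_k, and for m ≥ 1 set q_{k,m}(z) = (∏_{t=0}^{m−1} B(z^{d^t}))·q_k(z^{d^m}) and p_{k,m}(z) = (∏_{t=0}^{m−1} A(z^{d^t}))·p_k(z^{d^m}). Let b ∈ ℝ with |b| > 1 lie inside the disc of convergence of f and assume A(b^{d^t})·B(b^{d^t}) ≠ 0 for all t ≥ 0. Then there exist positive constants c₁, c₂, c₃, c₄ (depending on A, B, k but not on m) and M such that for all m ≥ M: c₁ ≤ |q_{k,m}(b)|/(|β|^m·|b|^{d^m(r_b/(d−1) + d_k)}) ≤ c₂ and c₃ ≤ |q_{k,m}(b)·f(b) − p_{k,m}(b)|/(|α|^m·|b|^{d^m(r_a/(d−1) − d_{k+1})}) ≤ c₄. -/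

import Mathlib

open Polynomial Filter

/-- The irrationality exponent of a real number `ξ`: the supremum (in `EReal`) of all real `m`
such that `|ξ - p/q| < q^{-m}` holds for infinitely many rationals `p/q` (`q ≥ 1`). -/
noncomputable def irrationalityExponent (ξ : ℝ) : EReal :=
  sSup {μ : EReal | ∃ m : ℝ, μ = (m : EReal) ∧
    {x : ℚ | |ξ - (x : ℝ)| < (x.den : ℝ) ^ (-m)}.Infinite}

/-- For a formal Laurent series `f(z) = ∑_i c i · z^{-i}` in `z⁻¹` (coefficients `c : ℤ → ℚ`),
`polyMulCoeff P c i` is the coefficient of `z^{-i}` in the product `P(z)·f(z)`. -/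
noncomputable def polyMulCoeff (P : Polynomial ℚ) (c : ℤ → ℚ) (i : ℤ) : ℚ :=
  ∑ j ∈ Finset.range (P.natDegree + 1), P.coeff j * c (i + j)

/-- Coefficient of `z^{-i}` in `f(z^d)`, where `f(z) = ∑_i c i · z^{-i}`. -/
noncomputable def substPowCoeff (d : ℕ) (c : ℤ → ℚ) (i : ℤ) : ℚ :=
  if (d : ℤ) ∣ i then c (i / d) else 0

/-- Coefficient of `z^{-i}` in a polynomial `p(z)`. -/
noncomputable def polyCoeffZinv (p : Polynomial ℚ) (i : ℤ) : ℚ :=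
  if i ≤ 0 then p.coeff (-i).toNat else 0

/-- `c` is the coefficient function of a Laurent series in `z⁻¹`:
`f(z) = ∑_{i ≥ i₀} c i · z^{-i}` (support bounded below). -/
def IsLaurentSupport (c : ℤ → ℚ) : Prop := ∃ i₀ : ℤ, ∀ i < i₀, c i = 0

/-- The Mahler functional equation `B(z)·f(z) = A(z)·f(z^d)`, stated coefficientwise for the
Laurent series `f(z) = ∑_i c i · z^{-i}`. -/
def MahlerEq (d : ℕ) (A B : Polynomial ℚ) (c : ℤ → ℚ) : Prop :=
  ∀ i : ℤ, polyMulCoeff B c i = polyMulCoeff A (substPowCoeff d c) i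

/-- The Laurent series `f(z) = ∑_i c i · z^{-i}` is a rational function. -/
def IsRationalFun (c : ℤ → ℚ) : Prop :=
  ∃ p q : Polynomial ℚ, q ≠ 0 ∧ ∀ i : ℤ, polyMulCoeff q c i = polyCoeffZinv p i

/-- `p/q` is a continued-fraction convergent of the Laurent series `f(z) = ∑_i c i · z^{-i}`:
`p, q` are coprime, `q ≠ 0`, and `q(z)f(z) - p(z)` only involves the powers `z^{-i}` with
`i > deg q` (ultrametric best-approximation criterion). -/
def IsConvergent (c : ℤ → ℚ) (p q : Polynomial ℚ) : Prop :=
  IsCoprime p q ∧ q ≠ 0 ∧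
  ∀ i : ℤ, i ≤ (q.natDegree : ℤ) → polyMulCoeff q c i = polyCoeffZinv p i

/-- `p/q` is a convergent of `f` whose error `q(z)f(z) - p(z) = ∑_{i ≥ e} c' i · z^{-i}` has
order exactly `e` (so `c' e ≠ 0`); for the `k`-th convergent, `e` is the degree `d_{k+1}` of the
denominator of the next convergent. -/
def IsConvergentWithOrder (c : ℤ → ℚ) (p q : Polynomial ℚ) (e : ℤ) : Prop :=
  IsCoprime p q ∧ q ≠ 0 ∧ (q.natDegree : ℤ) < e ∧
  (∀ i : ℤ, i < e → polyMulCoeff q c i = polyCoeffZinv p i) ∧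
  polyMulCoeff q c e ≠ polyCoeffZinv p e

/-- The value `f(b) = ∑_i c i · b^{-i}` of the Laurent series at a point `b`. -/
noncomputable def mahlerValue (c : ℤ → ℚ) (b : ℝ) : ℝ := ∑' i : ℤ, (c i : ℝ) * b ^ (-i)

/-- `b` lies inside the disc of convergence of `f`: `∑_i c i · b^{-i}` converges absolutely. -/
def InDiscOfConvergence (c : ℤ → ℚ) (b : ℝ) : Prop :=
  Summable fun i : ℤ => |(c i : ℝ) * b ^ (-i)|

/-- `Φ(f)`: the set of degrees of denominators of convergents of `f`. -/
def convDegrees (c : ℤ → ℚ) : Set ℕ :=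
  {n | ∃ p q : Polynomial ℚ, IsConvergent c p q ∧ q.natDegree = n}

/-- `[u,v]` is a gap in `Φ(f)`: `u, v ∈ Φ(f)`, `u < v`, and no element of `Φ(f)` lies strictly
between `u` and `v`. Its size is `v - u`. -/
def GapIn (c : ℤ → ℚ) (u v : ℕ) : Prop :=
  u ∈ convDegrees c ∧ v ∈ convDegrees c ∧ u < v ∧
  ∀ w : ℕ, u < w → w < v → w ∉ convDegrees c
open Polynomial Filter

lemma summable_shift {g : ℤ → ℝ} (hg : Summable g) (j : ℤ) :
    Summable (fun i => g (i + j)) := by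
  exact ((Equiv.addRight j).summable_iff (f := g)).2 hg

lemma zpow_split {x : ℝ} (hx : x ≠ 0) (i j : ℤ) :
    x ^ (-i) = x ^ j * x ^ (-(i + j)) := by
  rw [← zpow_add₀ hx]; ring_nf

lemma indisc_shift {c : ℤ → ℚ} {x : ℝ} (hx : x ≠ 0)
    (h : InDiscOfConvergence c x) (j : ℤ) :
    Summable (fun i : ℤ => |(c (i + j) : ℝ) * x ^ (-i)|) := by
  have h1 : Summable (fun i : ℤ => |(c (i + j) : ℝ) * x ^ (-(i + j))|) :=
    summable_shift h j
  refine (h1.mul_left |x ^ j|).congr fun i => ?_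
  rw [zpow_split hx i j, ← abs_mul]
  ring_nf

lemma summable_ser {c : ℤ → ℚ} {x : ℝ} (h : InDiscOfConvergence c x) :
    Summable (fun i : ℤ => (c i : ℝ) * x ^ (-i)) :=
  h.of_abs

lemma summable_ser_shift {c : ℤ → ℚ} {x : ℝ} (hx : x ≠ 0)
    (h : InDiscOfConvergence c x) (j : ℤ) :
    Summable (fun i : ℤ => (c (i + j) : ℝ) * x ^ (-i)) :=
  (indisc_shift hx h j).of_abs

lemma tsum_ser_shift {c : ℤ → ℚ} {x : ℝ} (hx : x ≠ 0)
    (h : InDiscOfConvergence c x) (j : ℤ) :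
    ∑' i : ℤ, (c (i + j) : ℝ) * x ^ (-i) = x ^ j * mahlerValue c x := by
  have : ∀ i : ℤ, (c (i + j) : ℝ) * x ^ (-i)
      = x ^ j * ((c (i + j) : ℝ) * x ^ (-(i + j))) := by
    intro i; rw [zpow_split hx i j]; ring
  rw [tsum_congr this, tsum_mul_left, mahlerValue]
  congr 1
  exact (Equiv.addRight j).tsum_eq (fun k => (c k : ℝ) * x ^ (-k))
lemma polyMulCoeff_cast (P : Polynomial ℚ) (c : ℤ → ℚ) (i : ℤ) (x : ℝ) :
    ((polyMulCoeff P c i : ℚ) : ℝ) * x ^ (-i)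
      = ∑ j ∈ Finset.range (P.natDegree + 1),
          (P.coeff j : ℝ) * ((c (i + j) : ℝ) * x ^ (-i)) := by
  rw [polyMulCoeff]
  push_cast
  rw [Finset.sum_mul]
  exact Finset.sum_congr rfl fun j _ => by ring

lemma summable_polyMul {c : ℤ → ℚ} {x : ℝ} (hx : x ≠ 0)
    (h : InDiscOfConvergence c x) (P : Polynomial ℚ) :
    Summable (fun i : ℤ => ((polyMulCoeff P c i : ℚ) : ℝ) * x ^ (-i)) := by
  have h1 : Summable (fun i : ℤ => ∑ j ∈ Finset.range (P.natDegree + 1),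
      (P.coeff j : ℝ) * ((c (i + j) : ℝ) * x ^ (-i))) :=
    summable_sum fun j _ => (summable_ser_shift hx h j).mul_left _
  exact h1.congr fun i => (polyMulCoeff_cast P c i x).symm

lemma tsum_polyMul {c : ℤ → ℚ} {x : ℝ} (hx : x ≠ 0)
    (h : InDiscOfConvergence c x) (P : Polynomial ℚ) :
    ∑' i : ℤ, ((polyMulCoeff P c i : ℚ) : ℝ) * x ^ (-i)
      = (aeval x P) * mahlerValue c x := by
  calc ∑' i : ℤ, ((polyMulCoeff P c i : ℚ) : ℝ) * x ^ (-i)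
      = ∑' i : ℤ, ∑ j ∈ Finset.range (P.natDegree + 1),
          (fun (j : ℕ) (i : ℤ) => (P.coeff j : ℝ) * ((c (i + j) : ℝ) * x ^ (-i))) j i :=
        tsum_congr fun i => polyMulCoeff_cast P c i x
    _ = ∑ j ∈ Finset.range (P.natDegree + 1),
          ∑' i : ℤ, (P.coeff j : ℝ) * ((c (i + j) : ℝ) * x ^ (-i)) :=
        Summable.tsum_finsetSum fun j _ => (summable_ser_shift hx h j).mul_left _
    _ = ∑ j ∈ Finset.range (P.natDegree + 1),
          ((P.coeff j : ℝ) * x ^ (j : ℤ)) * mahlerValue c x := by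
        refine Finset.sum_congr rfl fun j _ => ?_
        rw [tsum_mul_left, tsum_ser_shift hx h j]; ring
    _ = (aeval x P) * mahlerValue c x := by
        rw [← Finset.sum_mul, aeval_def, eval₂_eq_sum_range]
        norm_num [Rat.cast_def, zpow_natCast]
lemma polyCoeffZinv_support (p : Polynomial ℚ) (i : ℤ)
    (hi : i ∉ (Finset.range (p.natDegree + 1)).image (fun j : ℕ => -(j : ℤ))) :
    polyCoeffZinv p i = 0 := by
  rw [polyCoeffZinv]
  split_ifs with h
  · apply Polynomial.coeff_eq_zero_of_natDegree_lt
    by_contra hlt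
    push_neg at hlt
    exact hi (Finset.mem_image.2 ⟨(-i).toNat, Finset.mem_range.2 (by omega),
      by omega⟩)
  · rfl

lemma summable_polyZinv (p : Polynomial ℚ) (x : ℝ) :
    Summable (fun i : ℤ => ((polyCoeffZinv p i : ℚ) : ℝ) * x ^ (-i)) := by
  apply summable_of_ne_finset_zero
    (s := (Finset.range (p.natDegree + 1)).image (fun j : ℕ => -(j : ℤ)))
  intro i hi
  rw [polyCoeffZinv_support p i hi]
  simp

lemma tsum_polyZinv (p : Polynomial ℚ) {x : ℝ} (hx : x ≠ 0) :
    ∑' i : ℤ, ((polyCoeffZinv p i : ℚ) : ℝ) * x ^ (-i) = aeval x p := by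
  have hinj : Function.Injective (fun j : ℕ => -(j : ℤ)) := by
    intro a b h; simpa using h
  have hsupp : Function.support (fun i : ℤ => ((polyCoeffZinv p i : ℚ) : ℝ) * x ^ (-i))
      ⊆ Set.range (fun j : ℕ => -(j : ℤ)) := by
    intro i hi
    rw [Function.mem_support] at hi
    have : polyCoeffZinv p i ≠ 0 := by
      intro h0; apply hi; rw [h0]; simp
    have hle : i ≤ 0 := by
      by_contra hgt
      exact this (by rw [polyCoeffZinv]; simp [le_of_not_gt]; omega)
    exact ⟨(-i).toNat, by simp; omega⟩
  rw [← Function.Injective.tsum_eq hinj hsupp]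
  have : ∀ j : ℕ, ((polyCoeffZinv p (-(j:ℤ)) : ℚ) : ℝ) * x ^ (-(-(j:ℤ)))
      = (p.coeff j : ℝ) * x ^ j := by
    intro j
    rw [polyCoeffZinv]
    simp [zpow_natCast]
  rw [tsum_congr this]
  rw [tsum_eq_sum (s := Finset.range (p.natDegree + 1))
    (by intro j hj
        rw [Finset.mem_range] at hj
        rw [Polynomial.coeff_eq_zero_of_natDegree_lt (by omega)]
        simp)]
  rw [aeval_def, eval₂_eq_sum_range]
  norm_num [Rat.cast_def]

lemma substPowCoeff_support (d : ℕ) (hd : d ≠ 0) (c : ℤ → ℚ) (i : ℤ)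
    (hi : i ∉ Set.range (fun k : ℤ => (d : ℤ) * k)) : substPowCoeff d c i = 0 := by
  rw [substPowCoeff]
  split_ifs with h
  · exact absurd ⟨i / d, (Int.ediv_mul_cancel h).symm ▸ by
      obtain ⟨k, hk⟩ := h; exact (by rw [hk]; ring_nf; rw [Int.mul_ediv_cancel_left _ (by exact_mod_cast hd)])⟩ hi
  · rfl

lemma subst_term (d : ℕ) (hd : d ≠ 0) (c : ℤ → ℚ) {x : ℝ} (hx : x ≠ 0) (k : ℤ) :
    ((substPowCoeff d c ((d : ℤ) * k) : ℚ) : ℝ) * x ^ (-((d : ℤ) * k))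
      = (c k : ℝ) * (x ^ d) ^ (-k) := by
  have h1 : substPowCoeff d c ((d : ℤ) * k) = c k := by
    rw [substPowCoeff, if_pos ⟨k, rfl⟩, Int.mul_ediv_cancel_left _ (by exact_mod_cast hd)]
  rw [h1]
  congr 1
  rw [← zpow_natCast x d, ← zpow_mul]
  ring_nf

lemma summable_subst {d : ℕ} (hd : d ≠ 0) {c : ℤ → ℚ} {x : ℝ} (hx : x ≠ 0)
    (h : InDiscOfConvergence c (x ^ d)) :
    Summable (fun i : ℤ => ((substPowCoeff d c i : ℚ) : ℝ) * x ^ (-i)) := by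
  have hinj : Function.Injective (fun k : ℤ => (d : ℤ) * k) := fun a b hab => by
    simp only [mul_eq_mul_left_iff] at hab
    rcases hab with h1 | h1
    · exact h1
    · exact absurd h1 (by exact_mod_cast hd)
  rw [← Function.Injective.summable_iff hinj]
  · exact (summable_ser h).congr fun k => (subst_term d hd c hx k).symm
  · intro i hi
    rw [substPowCoeff_support d hd c i hi]
    simp

lemma tsum_subst {d : ℕ} (hd : d ≠ 0) {c : ℤ → ℚ} {x : ℝ} (hx : x ≠ 0)
    (h : InDiscOfConvergence c (x ^ d)) :
    ∑' i : ℤ, ((substPowCoeff d c i : ℚ) : ℝ) * x ^ (-i) = mahlerValue c (x ^ d) := by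
  have hinj : Function.Injective (fun k : ℤ => (d : ℤ) * k) := fun a b hab => by
    simp only [mul_eq_mul_left_iff] at hab
    rcases hab with h1 | h1
    · exact h1
    · exact absurd h1 (by exact_mod_cast hd)
  have hsupp : Function.support
      (fun i : ℤ => ((substPowCoeff d c i : ℚ) : ℝ) * x ^ (-i))
      ⊆ Set.range (fun k : ℤ => (d : ℤ) * k) := by
    intro i hi
    rw [Function.mem_support] at hi
    by_contra hr
    rw [substPowCoeff_support d hd c i hr] at hi
    simp at hi
  rw [← Function.Injective.tsum_eq hinj hsupp, mahlerValue]
  exact tsum_congr fun k => subst_term d hd c hx k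
lemma indisc_mono {c : ℤ → ℚ} (hc : IsLaurentSupport c) {x y : ℝ}
    (hx1 : 1 ≤ |x|) (hxy : |x| ≤ |y|) (h : InDiscOfConvergence c x) :
    InDiscOfConvergence c y := by
  obtain ⟨i₀, hi₀⟩ := hc
  rw [InDiscOfConvergence]
  have hsplit : (fun i : ℤ => |(c i : ℝ) * y ^ (-i)|)
      = (fun i : ℤ => if 0 ≤ i then |(c i : ℝ) * y ^ (-i)| else 0)
        + (fun i : ℤ => if 0 ≤ i then 0 else |(c i : ℝ) * y ^ (-i)|) := by
    funext i; by_cases h0 : 0 ≤ i <;> simp [h0]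
  rw [hsplit]
  apply Summable.add
  · apply Summable.of_nonneg_of_le (f := fun i : ℤ => |(c i : ℝ) * x ^ (-i)|)
      (fun i => by positivity) _ h
    intro i
    by_cases h0 : 0 ≤ i
    · simp only [if_pos h0, abs_mul]
      apply mul_le_mul_of_nonneg_left _ (abs_nonneg _)
      set n := i.toNat with hn
      have hi : i = (n : ℤ) := by omega
      rw [hi, zpow_neg, zpow_neg, zpow_natCast, zpow_natCast, abs_inv, abs_inv,
        abs_pow, abs_pow]
      have hxpos : (0:ℝ) < |x| ^ n := by positivity
      apply inv_anti₀ hxpos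
      exact pow_le_pow_left₀ (by linarith) hxy n
    · simp only [if_neg h0]
      positivity
  · apply summable_of_ne_finset_zero (s := Finset.Icc i₀ 0)
    intro i hi
    rw [Finset.mem_Icc] at hi
    by_cases h0 : 0 ≤ i
    · simp [h0]
    · rw [if_neg h0, hi₀ i (by omega)]
      simp

lemma indisc_subst {d : ℕ} (hd : d ≠ 0) {c : ℤ → ℚ} {x : ℝ} (hx : x ≠ 0)
    (h : InDiscOfConvergence c (x ^ d)) :
    InDiscOfConvergence (substPowCoeff d c) x := by
  have hinj : Function.Injective (fun k : ℤ => (d : ℤ) * k) := fun a b hab => by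
    simp only [mul_eq_mul_left_iff] at hab
    rcases hab with h1 | h1
    · exact h1
    · exact absurd h1 (by exact_mod_cast hd)
  rw [InDiscOfConvergence, ← Function.Injective.summable_iff hinj
    (by intro i hi; rw [substPowCoeff_support d hd c i hi]; simp)]
  exact h.congr fun k => by
    simp only [Function.comp_apply]
    rw [← subst_term d hd c hx k]

lemma mahler_step {d : ℕ} (hd : d ≠ 0) {A B : Polynomial ℚ} {c : ℤ → ℚ}
    (hfeq : MahlerEq d A B c) (hc : IsLaurentSupport c) {x : ℝ} (hx1 : 1 < |x|)
    (h : InDiscOfConvergence c x) :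
    (aeval x B) * mahlerValue c x = (aeval x A) * mahlerValue c (x ^ d) := by
  have hx : x ≠ 0 := by
    intro h0; rw [h0] at hx1; norm_num at hx1
  have hxd : InDiscOfConvergence c (x ^ d) := by
    apply indisc_mono hc hx1.le _ h
    rw [abs_pow]
    calc |x| = |x| ^ 1 := (pow_one _).symm
    _ ≤ |x| ^ d := pow_le_pow_right₀ (le_of_lt hx1) (by omega)
  have hsub : InDiscOfConvergence (substPowCoeff d c) x := indisc_subst hd hx hxd
  have e1 := tsum_polyMul hx h B
  have e2 := tsum_polyMul hx hsub A
  have e3 : mahlerValue (substPowCoeff d c) x = mahlerValue c (x ^ d) := by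
    rw [mahlerValue]
    exact tsum_subst hd hx hxd
  rw [← e1, tsum_congr (fun i => by rw [hfeq i] :
    ∀ i : ℤ, ((polyMulCoeff B c i : ℚ) : ℝ) * x ^ (-i)
      = ((polyMulCoeff A (substPowCoeff d c) i : ℚ) : ℝ) * x ^ (-i)), e2, e3]
lemma abs_pow_lt {b : ℝ} (hb : 1 < |b|) {n : ℕ} (hn : n ≠ 0) :
    |b| ≤ |b ^ n| ∧ 1 < |b ^ n| := by
  rw [abs_pow]
  constructor
  · calc |b| = |b| ^ 1 := (pow_one _).symm
    _ ≤ |b| ^ n := pow_le_pow_right₀ hb.le (by omega)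
  · calc (1:ℝ) < |b| := hb
    _ = |b| ^ 1 := (pow_one _).symm
    _ ≤ |b| ^ n := pow_le_pow_right₀ hb.le (by omega)

lemma indisc_iter {c : ℤ → ℚ} (hc : IsLaurentSupport c) {b : ℝ} (hb : 1 < |b|)
    (h : InDiscOfConvergence c b) {n : ℕ} (hn : n ≠ 0) :
    InDiscOfConvergence c (b ^ n) :=
  indisc_mono hc hb.le (abs_pow_lt hb hn).1 h

lemma mahler_iter {d : ℕ} (hd : 2 ≤ d) {A B : Polynomial ℚ} {c : ℤ → ℚ}
    (hfeq : MahlerEq d A B c) (hc : IsLaurentSupport c) {b : ℝ} (hb : 1 < |b|)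
    (h : InDiscOfConvergence c b) (m : ℕ) :
    mahlerValue c b * ∏ t ∈ Finset.range m, aeval (b ^ d ^ t) B
      = mahlerValue c (b ^ d ^ m) * ∏ t ∈ Finset.range m, aeval (b ^ d ^ t) A := by
  have hd0 : d ≠ 0 := by omega
  induction m with
  | zero => simp
  | succ m ih =>
    have hxm : InDiscOfConvergence c (b ^ d ^ m) :=
      indisc_iter hc hb h (by positivity)
    have hxm1 : 1 < |b ^ d ^ m| := (abs_pow_lt hb (by positivity)).2
    have step := mahler_step hd0 hfeq hc hxm1 hxm
    rw [← pow_mul, ← pow_succ] at step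
    rw [Finset.prod_range_succ, Finset.prod_range_succ, ← mul_assoc, ← mul_assoc,
      ih]
    calc mahlerValue c (b ^ d ^ m) * (∏ t ∈ Finset.range m, aeval (b ^ d ^ t) A)
          * aeval (b ^ d ^ m) B
        = (aeval (b ^ d ^ m) B * mahlerValue c (b ^ d ^ m))
          * ∏ t ∈ Finset.range m, aeval (b ^ d ^ t) A := by ring
      _ = (aeval (b ^ d ^ m) A * mahlerValue c (b ^ d ^ (m+1)))
          * ∏ t ∈ Finset.range m, aeval (b ^ d ^ t) A := by rw [step]
      _ = mahlerValue c (b ^ d ^ (m+1)) * ((∏ t ∈ Finset.range m, aeval (b ^ d ^ t) A)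
          * aeval (b ^ d ^ m) A) := by ring
      _ = (mahlerValue c (b ^ d ^ (m+1)) * ∏ t ∈ Finset.range m, aeval (b ^ d ^ t) A)
          * aeval (b ^ d ^ m) A := by ring
lemma indisc_polyMul {c : ℤ → ℚ} {x : ℝ} (hx : x ≠ 0)
    (h : InDiscOfConvergence c x) (P : Polynomial ℚ) :
    InDiscOfConvergence (polyMulCoeff P c) x := by
  rw [InDiscOfConvergence]
  apply Summable.of_nonneg_of_le (f := fun i : ℤ =>
      ∑ j ∈ Finset.range (P.natDegree + 1), |(P.coeff j : ℝ)| * |(c (i + j) : ℝ) * x ^ (-i)|)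
    (fun i => by positivity)
  · intro i
    rw [polyMulCoeff_cast P c i x]
    calc |∑ j ∈ Finset.range (P.natDegree + 1),
            (P.coeff j : ℝ) * ((c (i + j) : ℝ) * x ^ (-i))|
        ≤ ∑ j ∈ Finset.range (P.natDegree + 1),
            |(P.coeff j : ℝ) * ((c (i + j) : ℝ) * x ^ (-i))| :=
          Finset.abs_sum_le_sum_abs _ _
      _ = ∑ j ∈ Finset.range (P.natDegree + 1),
            |(P.coeff j : ℝ)| * |(c (i + j) : ℝ) * x ^ (-i)| := by
          exact Finset.sum_congr rfl fun j _ => abs_mul _ _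
  · exact summable_sum fun j _ => (indisc_shift hx h j).mul_left _

lemma indisc_polyZinv (p : Polynomial ℚ) (x : ℝ) :
    InDiscOfConvergence (polyCoeffZinv p) x := by
  apply summable_of_ne_finset_zero
    (s := (Finset.range (p.natDegree + 1)).image (fun j : ℕ => -(j : ℤ)))
  intro i hi
  rw [polyCoeffZinv_support p i hi]
  simp

lemma indisc_sub {c₁ c₂ : ℤ → ℚ} {x : ℝ} (h₁ : InDiscOfConvergence c₁ x)
    (h₂ : InDiscOfConvergence c₂ x) :
    InDiscOfConvergence (fun i => c₁ i - c₂ i) x := by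
  apply Summable.of_nonneg_of_le (f := fun i : ℤ =>
      |(c₁ i : ℝ) * x ^ (-i)| + |(c₂ i : ℝ) * x ^ (-i)|)
    (fun i => by positivity) _ (h₁.add h₂)
  intro i
  push_cast
  rw [sub_mul]
  exact abs_sub _ _
noncomputable def errC (c : ℤ → ℚ) (p q : Polynomial ℚ) (i : ℤ) : ℚ :=
  polyMulCoeff q c i - polyCoeffZinv p i

noncomputable def errS (c : ℤ → ℚ) (p q : Polynomial ℚ) (e : ℤ) (x : ℝ) : ℝ :=
  ∑' k : ℤ, ((errC c p q (k + e) : ℚ) : ℝ) * x ^ (-k)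

lemma indisc_err {c : ℤ → ℚ} {x : ℝ} (hx : x ≠ 0) (h : InDiscOfConvergence c x)
    (p q : Polynomial ℚ) : InDiscOfConvergence (errC c p q) x :=
  indisc_sub (indisc_polyMul hx h q) (indisc_polyZinv p x)

lemma summable_err {c : ℤ → ℚ} {x : ℝ} (hx : x ≠ 0) (h : InDiscOfConvergence c x)
    (p q : Polynomial ℚ) :
    Summable (fun i : ℤ => ((errC c p q i : ℚ) : ℝ) * x ^ (-i)) :=
  (indisc_err hx h p q).of_abs

lemma summable_errS {c : ℤ → ℚ} {x : ℝ} (hx : x ≠ 0) (h : InDiscOfConvergence c x)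
    (p q : Polynomial ℚ) (e : ℤ) :
    Summable (fun k : ℤ => ((errC c p q (k + e) : ℚ) : ℝ) * x ^ (-k)) :=
  (indisc_shift hx (indisc_err hx h p q) e).of_abs

lemma err_eq {c : ℤ → ℚ} {x : ℝ} (hx : x ≠ 0) (h : InDiscOfConvergence c x)
    (p q : Polynomial ℚ) (e : ℤ) :
    aeval x q * mahlerValue c x - aeval x p = x ^ (-e) * errS c p q e x := by
  have h1 : aeval x q * mahlerValue c x - aeval x p
      = ∑' i : ℤ, ((errC c p q i : ℚ) : ℝ) * x ^ (-i) := by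
    rw [← tsum_polyMul hx h q, ← tsum_polyZinv p hx,
      ← Summable.tsum_sub (summable_polyMul hx h q) (summable_polyZinv p x)]
    exact tsum_congr fun i => by rw [errC]; push_cast; ring
  rw [h1, ← (Equiv.addRight e).tsum_eq (fun i => ((errC c p q i : ℚ) : ℝ) * x ^ (-i)),
    errS, ← tsum_mul_left]
  exact tsum_congr fun k => by
    simp only [Equiv.coe_addRight]
    rw [show (-(k + e)) = -e + -k by ring, zpow_add₀ hx]
    ring

set_option maxHeartbeats 1000000 in
lemma errS_bound {c : ℤ → ℚ} {b : ℝ} (hb : 1 < |b|) (hcb : InDiscOfConvergence c b)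
    (p q : Polynomial ℚ) (e : ℤ)
    (horder : ∀ i : ℤ, i < e → polyMulCoeff q c i = polyCoeffZinv p i)
    {x : ℝ} (hx : |b| ≤ |x|) (hxin : InDiscOfConvergence c x) :
    |errS c p q e x - ((errC c p q e : ℚ) : ℝ)|
      ≤ (|b| * ∑' k : ℤ, |((errC c p q (k + e) : ℚ) : ℝ) * b ^ (-k)|) / |x| := by
  have hb0 : (0:ℝ) < |b| := by linarith
  have hx0 : (0:ℝ) < |x| := by linarith
  have hbne : b ≠ 0 := by intro h0; rw [h0] at hb0; simp at hb0
  have hxne : x ≠ 0 := by intro h0; rw [h0] at hx0; simp at hx0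
  have hg : Summable (fun k : ℤ => ((errC c p q (k + e) : ℚ) : ℝ) * x ^ (-k)) :=
    summable_errS hxne hxin p q e
  have hmaj : Summable (fun k : ℤ =>
      (|b| / |x|) * |((errC c p q (k + e) : ℚ) : ℝ) * b ^ (-k)|) :=
    (indisc_shift hbne (indisc_err hbne hcb p q) e).mul_left _
  have hterm : ∀ k : ℤ,
      |if k = 0 then 0 else ((errC c p q (k + e) : ℚ) : ℝ) * x ^ (-k)|
        ≤ (|b| / |x|) * |((errC c p q (k + e) : ℚ) : ℝ) * b ^ (-k)| := by
    intro k
    by_cases hk0 : k = 0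
    · rw [if_pos hk0]; simp; positivity
    · rw [if_neg hk0]
      rcases lt_or_gt_of_ne hk0 with hneg | hpos
      · have hz : errC c p q (k + e) = 0 := by
          rw [errC, horder _ (by omega), sub_self]
        simp [hz]
      · set n := (k - 1).toNat with hn
        have hk : k = (n : ℤ) + 1 := by omega
        rw [hk, abs_mul, abs_mul, show (-((n:ℤ)+1)) = -(((n+1 : ℕ)):ℤ) by push_cast; ring,
          zpow_neg, zpow_neg, zpow_natCast, zpow_natCast, abs_inv, abs_inv, abs_pow, abs_pow]
        have key : (|x| ^ (n+1))⁻¹ ≤ |b| / |x| * (|b| ^ (n+1))⁻¹ := by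
          have h1 : (|x| ^ n)⁻¹ ≤ (|b| ^ n)⁻¹ :=
            inv_anti₀ (by positivity) (pow_le_pow_left₀ hb0.le hx _)
          calc (|x| ^ (n+1))⁻¹ = (|x| ^ n)⁻¹ * |x|⁻¹ := by rw [pow_succ, mul_inv]
            _ ≤ (|b| ^ n)⁻¹ * |x|⁻¹ :=
              mul_le_mul_of_nonneg_right h1 (by positivity)
            _ = |b| / |x| * (|b| ^ (n+1))⁻¹ := by
              field_simp
              ring
        calc |((errC c p q ((n:ℤ) + 1 + e) : ℚ) : ℝ)| * (|x| ^ (n+1))⁻¹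
            ≤ |((errC c p q ((n:ℤ) + 1 + e) : ℚ) : ℝ)| * (|b| / |x| * (|b| ^ (n+1))⁻¹) :=
              mul_le_mul_of_nonneg_left key (abs_nonneg _)
          _ = |b| / |x| * (|((errC c p q ((n:ℤ) + 1 + e) : ℚ) : ℝ)| * (|b| ^ (n+1))⁻¹) := by
              ring
  have hite : Summable (fun k : ℤ =>
      |if k = 0 then 0 else ((errC c p q (k + e) : ℚ) : ℝ) * x ^ (-k)|) :=
    Summable.of_nonneg_of_le (fun k => abs_nonneg _) hterm hmaj
  have split := Summable.tsum_eq_add_tsum_ite hg 0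
  have h2 : errS c p q e x - ((errC c p q e : ℚ) : ℝ)
      = ∑' k : ℤ, (if k = 0 then 0 else ((errC c p q (k + e) : ℚ) : ℝ) * x ^ (-k)) := by
    rw [errS, split]
    simp
  rw [h2]
  calc |∑' k : ℤ, (if k = 0 then 0 else ((errC c p q (k + e) : ℚ) : ℝ) * x ^ (-k))|
      ≤ ∑' k : ℤ, |if k = 0 then 0 else ((errC c p q (k + e) : ℚ) : ℝ) * x ^ (-k)| := by
        have h3 := norm_tsum_le_tsum_norm
          (f := fun k : ℤ => (if k = 0 then 0 else ((errC c p q (k + e) : ℚ) : ℝ) * x ^ (-k)))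
          (by simp only [Real.norm_eq_abs]; exact hite)
        simp only [Real.norm_eq_abs] at h3
        exact h3
    _ ≤ ∑' k : ℤ, (|b| / |x|) * |((errC c p q (k + e) : ℚ) : ℝ) * b ^ (-k)| :=
        Summable.tsum_le_tsum hterm hite hmaj
    _ = (|b| * ∑' k : ℤ, |((errC c p q (k + e) : ℚ) : ℝ) * b ^ (-k)|) / |x| := by
        rw [tsum_mul_left]
        ring
lemma abs_aeval_le (P : Polynomial ℚ) :
    ∃ S : ℝ, 0 ≤ S ∧ ∀ x : ℝ, 1 ≤ |x| → |aeval x P| ≤ S * |x| ^ P.natDegree := by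
  refine ⟨∑ j ∈ Finset.range (P.natDegree + 1), |(P.coeff j : ℝ)|,
    Finset.sum_nonneg fun j _ => abs_nonneg _, fun x hx => ?_⟩
  rw [aeval_def, eval₂_eq_sum_range]
  have hcast : ∀ j : ℕ, (algebraMap ℚ ℝ) (P.coeff j) = ((P.coeff j : ℝ)) := fun _ => rfl
  simp only [hcast]
  calc |∑ j ∈ Finset.range (P.natDegree + 1), (P.coeff j : ℝ) * x ^ j|
      ≤ ∑ j ∈ Finset.range (P.natDegree + 1), |(P.coeff j : ℝ) * x ^ j| :=
        Finset.abs_sum_le_sum_abs _ _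
    _ ≤ ∑ j ∈ Finset.range (P.natDegree + 1), |(P.coeff j : ℝ)| * |x| ^ P.natDegree := by
        refine Finset.sum_le_sum fun j hj => ?_
        rw [Finset.mem_range] at hj
        rw [abs_mul, abs_pow]
        apply mul_le_mul_of_nonneg_left _ (abs_nonneg _)
        exact pow_le_pow_right₀ hx (by omega)
    _ = _ := (Finset.sum_mul _ _ _).symm

lemma lead_approx (P : Polynomial ℚ) :
    ∃ C : ℝ, 0 ≤ C ∧ ∀ x : ℝ, 1 ≤ |x| →
      |aeval x P - (P.leadingCoeff : ℝ) * x ^ P.natDegree| * |x| ≤ C * |x| ^ P.natDegree := by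
  have hsplit : ∀ x : ℝ, aeval x P - (P.leadingCoeff : ℝ) * x ^ P.natDegree
      = aeval x P.eraseLead := by
    intro x
    have h1 := congrArg (aeval x) (Polynomial.eraseLead_add_C_mul_X_pow P)
    rw [map_add, map_mul, map_pow, aeval_C, aeval_X] at h1
    have h2 : (algebraMap ℚ ℝ) P.leadingCoeff = (P.leadingCoeff : ℝ) := rfl
    rw [h2] at h1
    linarith [h1]
  rcases Polynomial.eraseLead_natDegree_lt_or_eraseLead_eq_zero (f := P) with hlt | hzero
  · obtain ⟨S, hS0, hS⟩ := abs_aeval_le P.eraseLead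
    refine ⟨S, hS0, fun x hx => ?_⟩
    rw [hsplit x]
    calc |aeval x P.eraseLead| * |x| ≤ (S * |x| ^ P.eraseLead.natDegree) * |x| :=
          mul_le_mul_of_nonneg_right (hS x hx) (abs_nonneg _)
      _ = S * |x| ^ (P.eraseLead.natDegree + 1) := by rw [pow_succ]; ring
      _ ≤ S * |x| ^ P.natDegree := by
          apply mul_le_mul_of_nonneg_left _ hS0
          exact pow_le_pow_right₀ hx (by omega)
  · refine ⟨0, le_refl 0, fun x hx => ?_⟩
    rw [hsplit x, hzero]
    simp

lemma u_dist {b : ℝ} (hb : 1 < |b|) {d : ℕ} (hd : 2 ≤ d) (P : Polynomial ℚ) (hP : P ≠ 0) :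
    ∃ C : ℝ, 0 ≤ C ∧ ∀ t : ℕ,
      abs (|aeval (b ^ d ^ t) P| / (|(P.leadingCoeff : ℝ)| * |b| ^ (d ^ t * P.natDegree)) - 1)
        ≤ C * (|b|⁻¹) ^ t := by
  obtain ⟨C0, hC0, hC⟩ := lead_approx P
  have hlc : (0:ℝ) < |(P.leadingCoeff : ℝ)| := by
    rw [abs_pos]
    exact_mod_cast Polynomial.leadingCoeff_ne_zero.2 hP
  refine ⟨C0 / |(P.leadingCoeff : ℝ)|, by positivity, fun t => ?_⟩
  set x := b ^ d ^ t with hxdef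
  have hx1 : 1 < |x| := (abs_pow_lt hb (by positivity)).2
  have hx0 : (0:ℝ) < |x| := by linarith
  have hxb : |b| ^ t ≤ |x| := by
    rw [hxdef, abs_pow]
    apply pow_le_pow_right₀ hb.le
    calc t ≤ 2 ^ t := (Nat.lt_two_pow_self (n := t)).le
    _ ≤ d ^ t := Nat.pow_le_pow_left hd t
  have hD : |b| ^ (d ^ t * P.natDegree) = |x| ^ P.natDegree := by
    rw [hxdef, abs_pow, ← pow_mul]
  set D := |(P.leadingCoeff : ℝ)| * |b| ^ (d ^ t * P.natDegree) with hDdef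
  have hDpos : 0 < D := by positivity
  have hDx : D = |(P.leadingCoeff : ℝ) * x ^ P.natDegree| := by
    rw [hDdef, abs_mul, abs_pow, hD]
  have key : abs (|aeval x P| - D) ≤ C0 * |x| ^ P.natDegree / |x| := by
    rw [hDx]
    calc abs (|aeval x P| - |(P.leadingCoeff : ℝ) * x ^ P.natDegree|)
        ≤ |aeval x P - (P.leadingCoeff : ℝ) * x ^ P.natDegree| := abs_abs_sub_abs_le_abs_sub _ _
      _ ≤ C0 * |x| ^ P.natDegree / |x| := by
          rw [le_div_iff₀ hx0]
          exact hC x hx1.le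
  have heq : |aeval x P| / D - 1 = (|aeval x P| - D) / D := by
    field_simp
  rw [heq, abs_div, abs_of_pos hDpos, div_le_iff₀ hDpos]
  calc abs (|aeval x P| - D) ≤ C0 * |x| ^ P.natDegree / |x| := key
    _ ≤ C0 / |(P.leadingCoeff : ℝ)| * (|b|⁻¹) ^ t * D := by
        rw [hDdef, hD]
        rw [div_eq_mul_inv, div_eq_mul_inv]
        have hinv : |x|⁻¹ ≤ (|b| ^ t)⁻¹ :=
          inv_anti₀ (by positivity) hxb
        calc C0 * |x| ^ P.natDegree * |x|⁻¹ ≤ C0 * |x| ^ P.natDegree * (|b| ^ t)⁻¹ := by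
              apply mul_le_mul_of_nonneg_left hinv (by positivity)
          _ = C0 * |(P.leadingCoeff : ℝ)|⁻¹ * (|b|⁻¹) ^ t
              * (|(P.leadingCoeff : ℝ)| * |x| ^ P.natDegree) := by
              rw [inv_pow]
              field_simp
lemma prod_one_sub_ge (s : Finset ℕ) (x : ℕ → ℝ) (h0 : ∀ t ∈ s, 0 ≤ x t)
    (h1 : ∀ t ∈ s, x t ≤ 1) :
    1 - ∑ t ∈ s, x t ≤ ∏ t ∈ s, (1 - x t) := by
  induction s using Finset.cons_induction with
  | empty => simp
  | cons a s ha ih =>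
    rw [Finset.prod_cons, Finset.sum_cons]
    have h0a := h0 a (Finset.mem_cons_self a s)
    have h1a := h1 a (Finset.mem_cons_self a s)
    have ih' := ih (fun t ht => h0 t (Finset.mem_cons_of_mem ht))
      (fun t ht => h1 t (Finset.mem_cons_of_mem ht))
    have hsum : 0 ≤ ∑ t ∈ s, x t :=
      Finset.sum_nonneg fun t ht => h0 t (Finset.mem_cons_of_mem ht)
    nlinarith [ih', h0a, h1a, hsum]

lemma prod_bounds (s : Finset ℕ) (x : ℕ → ℝ) (h0 : ∀ t ∈ s, 0 ≤ x t)
    (hsum : ∑ t ∈ s, x t ≤ 1/2) :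
    1/2 ≤ ∏ t ∈ s, (1 - x t) ∧ ∏ t ∈ s, (1 + x t) ≤ 2 := by
  have h1 : ∀ t ∈ s, x t ≤ 1 := by
    intro t ht
    have := Finset.single_le_sum h0 ht
    linarith
  have hlow : 1/2 ≤ ∏ t ∈ s, (1 - x t) := by
    have := prod_one_sub_ge s x h0 h1
    linarith
  refine ⟨hlow, ?_⟩
  have hmul : (∏ t ∈ s, (1 + x t)) * (∏ t ∈ s, (1 - x t)) ≤ 1 := by
    rw [← Finset.prod_mul_distrib]
    apply Finset.prod_le_one
    · intro t ht
      nlinarith [h0 t ht, h1 t ht]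
    · intro t ht
      nlinarith [h0 t ht, h1 t ht]
  have hppos : 0 ≤ ∏ t ∈ s, (1 + x t) :=
    Finset.prod_nonneg fun t ht => by linarith [h0 t ht]
  nlinarith [hmul, hlow, hppos]

lemma sum_geo_Ico (C w : ℝ) (hC : 0 ≤ C) (hw0 : 0 ≤ w) (hw1 : w < 1) (T m : ℕ) :
    ∑ t ∈ Finset.Ico T m, C * w ^ t ≤ C * w ^ T * (1 - w)⁻¹ := by
  rw [← Finset.mul_sum]
  rw [Finset.sum_Ico_eq_sum_range]
  have h1 : ∀ k : ℕ, w ^ (T + k) = w ^ T * w ^ k := fun k => pow_add w T k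
  rw [Finset.sum_congr rfl (fun k _ => h1 k), ← Finset.mul_sum]
  have h2 : ∑ k ∈ Finset.range (m - T), w ^ k ≤ (1 - w)⁻¹ := by
    rw [← tsum_geometric_of_lt_one hw0 hw1]
    exact Summable.sum_le_tsum _ (fun k _ => by positivity) (summable_geometric_of_lt_one hw0 hw1)
  calc C * (w ^ T * ∑ k ∈ Finset.range (m - T), w ^ k)
      ≤ C * (w ^ T * (1 - w)⁻¹) :=
        mul_le_mul_of_nonneg_left (mul_le_mul_of_nonneg_left h2 (by positivity)) hC
    _ = C * w ^ T * (1 - w)⁻¹ := by ring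

lemma prod_u_bounds (u : ℕ → ℝ) (hpos : ∀ t, 0 < u t) (C w : ℝ) (hC : 0 ≤ C)
    (hw0 : 0 ≤ w) (hw1 : w < 1) (hdist : ∀ t, |u t - 1| ≤ C * w ^ t) :
    ∃ l L : ℝ, 0 < l ∧ 0 < L ∧ ∃ M : ℕ, ∀ m ≥ M,
      l ≤ ∏ t ∈ Finset.range m, u t ∧ ∏ t ∈ Finset.range m, u t ≤ L := by
  have htend : Tendsto (fun T : ℕ => C * w ^ T * (1 - w)⁻¹) atTop (nhds 0) := by
    have := (tendsto_pow_atTop_nhds_zero_of_lt_one hw0 hw1).const_mul C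
    simpa using this.mul_const (1 - w)⁻¹
  obtain ⟨T, hT⟩ := (htend.eventually (eventually_le_nhds (by norm_num : (0:ℝ) < 1/2))).exists_forall_of_atTop
  have hT2 : C * w ^ T * (1 - w)⁻¹ ≤ 1/2 := hT T (le_refl T)
  have hPTpos : 0 < ∏ t ∈ Finset.range T, u t := Finset.prod_pos fun t _ => hpos t
  refine ⟨(∏ t ∈ Finset.range T, u t) * (1/2), (∏ t ∈ Finset.range T, u t) * 2,
    by positivity, by positivity, T, fun m hm => ?_⟩
  have hsplit : ∏ t ∈ Finset.range m, u t
      = (∏ t ∈ Finset.range T, u t) * ∏ t ∈ Finset.Ico T m, u t := by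
    simp only [Finset.range_eq_Ico]
    exact (Finset.prod_Ico_consecutive u (Nat.zero_le T) hm).symm
  have hsum : ∑ t ∈ Finset.Ico T m, C * w ^ t ≤ 1/2 :=
    le_trans (sum_geo_Ico C w hC hw0 hw1 T m) hT2
  have h0 : ∀ t ∈ Finset.Ico T m, 0 ≤ C * w ^ t := fun t _ => by positivity
  obtain ⟨hlow, hup⟩ := prod_bounds (Finset.Ico T m) (fun t => C * w ^ t) h0 hsum
  have hub : ∀ t ∈ Finset.Ico T m, u t ≤ 1 + C * w ^ t := by
    intro t _
    have := abs_le.1 (hdist t)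
    linarith [this.2]
  have hlb : ∀ t ∈ Finset.Ico T m, 1 - C * w ^ t ≤ u t := by
    intro t _
    have := abs_le.1 (hdist t)
    linarith [this.1]
  have hIlow : 1/2 ≤ ∏ t ∈ Finset.Ico T m, u t := by
    calc (1:ℝ)/2 ≤ ∏ t ∈ Finset.Ico T m, (1 - C * w ^ t) := hlow
      _ ≤ ∏ t ∈ Finset.Ico T m, u t := by
          apply Finset.prod_le_prod
          · intro t ht
            have h1 : C * w ^ t ≤ 1 := by
              have := Finset.single_le_sum h0 ht
              linarith
            linarith
          · exact hlb
  have hIup : ∏ t ∈ Finset.Ico T m, u t ≤ 2 := by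
    calc ∏ t ∈ Finset.Ico T m, u t ≤ ∏ t ∈ Finset.Ico T m, (1 + C * w ^ t) := by
          apply Finset.prod_le_prod
          · intro t ht
            exact (hpos t).le
          · exact hub
      _ ≤ 2 := hup
  constructor
  · rw [hsplit]
    exact mul_le_mul_of_nonneg_left hIlow hPTpos.le
  · rw [hsplit]
    exact mul_le_mul_of_nonneg_left hIup hPTpos.le
lemma prod_aeval_eq {b : ℝ} (hb : 1 < |b|) {d : ℕ} (hd : 2 ≤ d) (P : Polynomial ℚ)
    (hP : P ≠ 0) (m : ℕ) :
    ∏ t ∈ Finset.range m, |aeval (b ^ d ^ t) P|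
      = (∏ t ∈ Finset.range m,
          (|aeval (b ^ d ^ t) P| / (|(P.leadingCoeff : ℝ)| * |b| ^ (d ^ t * P.natDegree))))
        * (|(P.leadingCoeff : ℝ)| ^ m
            * |b| ^ (∑ t ∈ Finset.range m, d ^ t * P.natDegree)) := by
  have hlc : (0:ℝ) < |(P.leadingCoeff : ℝ)| := by
    rw [abs_pos]; exact_mod_cast Polynomial.leadingCoeff_ne_zero.2 hP
  have hb0 : (0:ℝ) < |b| := by linarith
  calc ∏ t ∈ Finset.range m, |aeval (b ^ d ^ t) P|
      = ∏ t ∈ Finset.range m,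
          ((|aeval (b ^ d ^ t) P| / (|(P.leadingCoeff : ℝ)| * |b| ^ (d ^ t * P.natDegree)))
            * (|(P.leadingCoeff : ℝ)| * |b| ^ (d ^ t * P.natDegree))) := by
        refine Finset.prod_congr rfl fun t _ => ?_
        rw [div_mul_cancel₀]
        positivity
    _ = (∏ t ∈ Finset.range m,
          (|aeval (b ^ d ^ t) P| / (|(P.leadingCoeff : ℝ)| * |b| ^ (d ^ t * P.natDegree))))
        * ∏ t ∈ Finset.range m, (|(P.leadingCoeff : ℝ)| * |b| ^ (d ^ t * P.natDegree)) :=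
        Finset.prod_mul_distrib
    _ = _ := by
        rw [Finset.prod_mul_distrib, Finset.prod_const, Finset.card_range,
          Finset.prod_pow_eq_pow_sum]

lemma prod_aeval_bounds {b : ℝ} (hb : 1 < |b|) {d : ℕ} (hd : 2 ≤ d) (P : Polynomial ℚ)
    (hP : P ≠ 0) (hnz : ∀ t : ℕ, aeval (b ^ d ^ t) P ≠ 0) :
    ∃ l L : ℝ, 0 < l ∧ 0 < L ∧ ∃ M : ℕ, ∀ m ≥ M,
      l * (|(P.leadingCoeff : ℝ)| ^ m * |b| ^ (∑ t ∈ Finset.range m, d ^ t * P.natDegree))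
        ≤ ∏ t ∈ Finset.range m, |aeval (b ^ d ^ t) P| ∧
      ∏ t ∈ Finset.range m, |aeval (b ^ d ^ t) P|
        ≤ L * (|(P.leadingCoeff : ℝ)| ^ m
            * |b| ^ (∑ t ∈ Finset.range m, d ^ t * P.natDegree)) := by
  have hlc : (0:ℝ) < |(P.leadingCoeff : ℝ)| := by
    rw [abs_pos]; exact_mod_cast Polynomial.leadingCoeff_ne_zero.2 hP
  have hb0 : (0:ℝ) < |b| := by linarith
  obtain ⟨C, hC0, hC⟩ := u_dist hb hd P hP
  have hupos : ∀ t : ℕ, 0 < |aeval (b ^ d ^ t) P|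
      / (|(P.leadingCoeff : ℝ)| * |b| ^ (d ^ t * P.natDegree)) := by
    intro t
    apply div_pos
    · rw [abs_pos]; exact hnz t
    · positivity
  obtain ⟨l, L, hl, hL, M, hM⟩ := prod_u_bounds _ hupos C |b|⁻¹ hC0
    (by positivity) (inv_lt_one_of_one_lt₀ hb) hC
  refine ⟨l, L, hl, hL, M, fun m hm => ?_⟩
  obtain ⟨h1, h2⟩ := hM m hm
  rw [prod_aeval_eq hb hd P hP m]
  constructor
  · exact mul_le_mul_of_nonneg_right h1 (by positivity)
  · exact mul_le_mul_of_nonneg_right h2 (by positivity)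

lemma aeval_single_bounds {b : ℝ} (hb : 1 < |b|) {d : ℕ} (hd : 2 ≤ d) (P : Polynomial ℚ)
    (hP : P ≠ 0) :
    ∃ M : ℕ, ∀ m ≥ M,
      1/2 * (|(P.leadingCoeff : ℝ)| * |b| ^ (d ^ m * P.natDegree))
        ≤ |aeval (b ^ d ^ m) P| ∧
      |aeval (b ^ d ^ m) P|
        ≤ 2 * (|(P.leadingCoeff : ℝ)| * |b| ^ (d ^ m * P.natDegree)) := by
  have hlc : (0:ℝ) < |(P.leadingCoeff : ℝ)| := by
    rw [abs_pos]; exact_mod_cast Polynomial.leadingCoeff_ne_zero.2 hP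
  have hb0 : (0:ℝ) < |b| := by linarith
  obtain ⟨C, hC0, hC⟩ := u_dist hb hd P hP
  have htend : Tendsto (fun m : ℕ => C * (|b|⁻¹) ^ m) atTop (nhds 0) := by
    simpa using (tendsto_pow_atTop_nhds_zero_of_lt_one (by positivity)
      (inv_lt_one_of_one_lt₀ hb)).const_mul C
  obtain ⟨M, hM⟩ := (htend.eventually
    (eventually_le_nhds (by norm_num : (0:ℝ) < 1/2))).exists_forall_of_atTop
  refine ⟨M, fun m hm => ?_⟩
  have hdist := le_trans (hC m) (hM m hm)
  have habs := abs_le.1 hdist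
  set D := |(P.leadingCoeff : ℝ)| * |b| ^ (d ^ m * P.natDegree) with hD
  have hDpos : 0 < D := by positivity
  have hu : |aeval (b ^ d ^ m) P| = (|aeval (b ^ d ^ m) P| / D) * D :=
    (div_mul_cancel₀ _ hDpos.ne').symm
  constructor
  · rw [hu]
    apply mul_le_mul_of_nonneg_right _ hDpos.le
    linarith [habs.1]
  · rw [hu]
    apply mul_le_mul_of_nonneg_right _ hDpos.le
    linarith [habs.2]
lemma errS_window {c : ℤ → ℚ} (hc : IsLaurentSupport c) {b : ℝ} (hb : 1 < |b|)
    (hcb : InDiscOfConvergence c b) {d : ℕ} (hd : 2 ≤ d) (p q : Polynomial ℚ) (e : ℤ)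
    (horder : ∀ i : ℤ, i < e → polyMulCoeff q c i = polyCoeffZinv p i)
    (hne : polyMulCoeff q c e ≠ polyCoeffZinv p e) :
    0 < |((errC c p q e : ℚ) : ℝ)| ∧ ∃ MS : ℕ, ∀ m ≥ MS,
      |((errC c p q e : ℚ) : ℝ)| / 2 ≤ |errS c p q e (b ^ d ^ m)| ∧
      |errS c p q e (b ^ d ^ m)| ≤ 2 * |((errC c p q e : ℚ) : ℝ)| := by
  have hb0 : (0:ℝ) < |b| := by linarith
  have hbne : b ≠ 0 := by intro h0; rw [h0] at hb0; simp at hb0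
  have hh : 0 < |((errC c p q e : ℚ) : ℝ)| := by
    rw [abs_pos, Rat.cast_ne_zero, errC]
    exact sub_ne_zero_of_ne hne
  set h := |((errC c p q e : ℚ) : ℝ)| with hhdef
  refine ⟨hh, ?_⟩
  set CR := |b| * ∑' k : ℤ, |((errC c p q (k + e) : ℚ) : ℝ) * b ^ (-k)| with hCR
  have hCR0 : 0 ≤ CR := by
    apply mul_nonneg hb0.le
    exact tsum_nonneg fun k => abs_nonneg _
  have htend : Tendsto (fun m : ℕ => CR * (|b|⁻¹) ^ m) atTop (nhds 0) := by
    simpa using (tendsto_pow_atTop_nhds_zero_of_lt_one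
      (by positivity : (0:ℝ) ≤ |b|⁻¹) (inv_lt_one_of_one_lt₀ hb)).const_mul CR
  obtain ⟨MS, hMS⟩ := (htend.eventually
    (eventually_le_nhds (by positivity : (0:ℝ) < h/2))).exists_forall_of_atTop
  refine ⟨MS, fun m hm => ?_⟩
  set x := b ^ d ^ m with hx
  have hxabs := abs_pow_lt hb (show d ^ m ≠ 0 by positivity)
  have hxin : InDiscOfConvergence c x := indisc_iter hc hb hcb (by positivity)
  have hbnd := errS_bound hb hcb p q e horder hxabs.1 hxin
  have hxb : |b| ^ m ≤ |x| := by
    rw [hx, abs_pow]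
    apply pow_le_pow_right₀ hb.le
    calc m ≤ 2 ^ m := (Nat.lt_two_pow_self (n := m)).le
    _ ≤ d ^ m := Nat.pow_le_pow_left hd m
  have hx0 : (0:ℝ) < |x| := by linarith [hxabs.2]
  have hbnd2 : CR / |x| ≤ CR * (|b|⁻¹) ^ m := by
    rw [div_eq_mul_inv, inv_pow]
    apply mul_le_mul_of_nonneg_left _ hCR0
    exact inv_anti₀ (by positivity) hxb
  have hfinal : |errS c p q e x - ((errC c p q e : ℚ) : ℝ)| ≤ h / 2 :=
    le_trans hbnd (le_trans hbnd2 (hMS m hm))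
  have htri := abs_abs_sub_abs_le_abs_sub (errS c p q e x) ((errC c p q e : ℚ) : ℝ)
  have := abs_le.1 htri
  constructor
  · linarith [abs_le.1 htri |>.1]
  · linarith [abs_le.1 htri |>.2]

lemma rpow_exp_id1 {b : ℝ} (hb0 : 0 < b) {d : ℕ} (hd : 2 ≤ d) (n dk m : ℕ) :
    b ^ (∑ t ∈ Finset.range m, d ^ t * n) * b ^ (d ^ m * dk)
      = b ^ (-(n:ℝ) / ((d:ℝ) - 1))
        * b ^ ((d:ℝ) ^ m * ((n:ℝ) / ((d:ℝ) - 1) + (dk:ℝ))) := by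
  rw [← Real.rpow_natCast b (∑ t ∈ Finset.range m, d ^ t * n),
    ← Real.rpow_natCast b (d ^ m * dk), ← Real.rpow_add hb0, ← Real.rpow_add hb0]
  congr 1
  have hg : (∑ t ∈ Finset.range m, (d:ℝ) ^ t) * ((d:ℝ) - 1) = (d:ℝ) ^ m - 1 :=
    geom_sum_mul _ m
  have hd1 : (d:ℝ) - 1 ≠ 0 := by
    have : (2:ℝ) ≤ (d:ℝ) := by exact_mod_cast hd
    linarith
  push_cast
  rw [← Finset.sum_mul]
  have hgv : (∑ t ∈ Finset.range m, (d:ℝ) ^ t) = ((d:ℝ) ^ m - 1) / ((d:ℝ) - 1) := by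
    rw [eq_div_iff hd1]; exact hg
  rw [hgv]
  field_simp
  ring

lemma rpow_exp_id2 {b : ℝ} (hb0 : 0 < b) {d : ℕ} (hd : 2 ≤ d) (n e m : ℕ) :
    b ^ (∑ t ∈ Finset.range m, d ^ t * n) * (b ^ (d ^ m * e))⁻¹
      = b ^ (-(n:ℝ) / ((d:ℝ) - 1))
        * b ^ ((d:ℝ) ^ m * ((n:ℝ) / ((d:ℝ) - 1) - (e:ℝ))) := by
  rw [← Real.rpow_natCast b (∑ t ∈ Finset.range m, d ^ t * n),
    ← Real.rpow_natCast b (d ^ m * e), ← Real.rpow_neg hb0.le,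
    ← Real.rpow_add hb0, ← Real.rpow_add hb0]
  congr 1
  have hg : (∑ t ∈ Finset.range m, (d:ℝ) ^ t) * ((d:ℝ) - 1) = (d:ℝ) ^ m - 1 :=
    geom_sum_mul _ m
  have hd1 : (d:ℝ) - 1 ≠ 0 := by
    have : (2:ℝ) ≤ (d:ℝ) := by exact_mod_cast hd
    linarith
  push_cast
  rw [← Finset.sum_mul]
  have hgv : (∑ t ∈ Finset.range m, (d:ℝ) ^ t) = ((d:ℝ) ^ m - 1) / ((d:ℝ) - 1) := by
    rw [eq_div_iff hd1]; exact hg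
  rw [hgv]
  field_simp
  ring

/-- **Lemma 4.** Let `d ≥ 2`, `A, B ∈ ℚ[X]` nonzero coprime with degrees `r_a, r_b` and leading
coefficients `α, β`, and let `f ∈ ℚ((z⁻¹))` be a non-rational solution of `B(z)f(z) = A(z)f(z^d)`.
Let `p/q` be a convergent of `f` with `d_k = deg q` and error order `e = d_{k+1}`, and set
`q_{k,m}(z) = ∏_{t<m} B(z^{d^t})·q(z^{d^m})`, `p_{k,m}(z) = ∏_{t<m} A(z^{d^t})·p(z^{d^m})`.
If `b ∈ ℝ`, `|b| > 1`, lies inside the disc of convergence of `f` and `A(b^{d^t})·B(b^{d^t}) ≠ 0`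
for all `t ≥ 0`, then for all large `m`:
`|q_{k,m}(b)| ≍ |β|^m·|b|^{d^m(r_b/(d-1) + d_k)}` and
`|q_{k,m}(b)f(b) - p_{k,m}(b)| ≍ |α|^m·|b|^{d^m(r_a/(d-1) - d_{k+1})}`,
with implied constants independent of `m`. -/
theorem statement7
    (d : ℕ) (hd : 2 ≤ d)
    (A B : Polynomial ℚ) (hA : A ≠ 0) (hB : B ≠ 0) (hAB : IsCoprime A B)
    (c : ℤ → ℚ) (hc : IsLaurentSupport c)
    (hfeq : MahlerEq d A B c)
    (hnotrat : ¬ IsRationalFun c)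
    (b : ℝ) (hb : 1 < |b|)
    (hbconv : InDiscOfConvergence c b)
    (hAB0 : ∀ t : ℕ, (Polynomial.aeval (b ^ d ^ t)) A * (Polynomial.aeval (b ^ d ^ t)) B ≠ 0)
    (p q : Polynomial ℚ) (e : ℕ)
    (hconv : IsConvergentWithOrder c p q (e : ℤ)) :
    ∃ c₁ c₂ c₃ c₄ : ℝ, 0 < c₁ ∧ 0 < c₂ ∧ 0 < c₃ ∧ 0 < c₄ ∧ ∃ M : ℕ, ∀ m ≥ M,
      (c₁ ≤ |(∏ t ∈ Finset.range m, (Polynomial.aeval (b ^ d ^ t)) B)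
              * (Polynomial.aeval (b ^ d ^ m)) q|
            / ((|(B.leadingCoeff : ℝ)|) ^ m
               * |b| ^ ((d : ℝ) ^ m * ((B.natDegree : ℝ) / ((d : ℝ) - 1) + (q.natDegree : ℝ))))
        ∧ |(∏ t ∈ Finset.range m, (Polynomial.aeval (b ^ d ^ t)) B)
              * (Polynomial.aeval (b ^ d ^ m)) q|
            / ((|(B.leadingCoeff : ℝ)|) ^ m
               * |b| ^ ((d : ℝ) ^ m * ((B.natDegree : ℝ) / ((d : ℝ) - 1) + (q.natDegree : ℝ))))
          ≤ c₂)
      ∧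
      (c₃ ≤ |(∏ t ∈ Finset.range m, (Polynomial.aeval (b ^ d ^ t)) B)
              * (Polynomial.aeval (b ^ d ^ m)) q * mahlerValue c b
             - (∏ t ∈ Finset.range m, (Polynomial.aeval (b ^ d ^ t)) A)
              * (Polynomial.aeval (b ^ d ^ m)) p|
            / ((|(A.leadingCoeff : ℝ)|) ^ m
               * |b| ^ ((d : ℝ) ^ m * ((A.natDegree : ℝ) / ((d : ℝ) - 1) - (e : ℝ))))
        ∧ |(∏ t ∈ Finset.range m, (Polynomial.aeval (b ^ d ^ t)) B)
              * (Polynomial.aeval (b ^ d ^ m)) q * mahlerValue c b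
             - (∏ t ∈ Finset.range m, (Polynomial.aeval (b ^ d ^ t)) A)
              * (Polynomial.aeval (b ^ d ^ m)) p|
            / ((|(A.leadingCoeff : ℝ)|) ^ m
               * |b| ^ ((d : ℝ) ^ m * ((A.natDegree : ℝ) / ((d : ℝ) - 1) - (e : ℝ))))
          ≤ c₄) := by
  -- main proof
  have hb0 : (0:ℝ) < |b| := by linarith
  have hbne : b ≠ 0 := by intro h0; rw [h0] at hb0; simp at hb0
  have hq : q ≠ 0 := hconv.2.1
  have horder : ∀ i : ℤ, i < (e:ℤ) → polyMulCoeff q c i = polyCoeffZinv p i :=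
    hconv.2.2.2.1
  have hne : polyMulCoeff q c (e:ℤ) ≠ polyCoeffZinv p (e:ℤ) := hconv.2.2.2.2
  have hA0 : ∀ t : ℕ, aeval (b ^ d ^ t) A ≠ 0 := fun t h0 => hAB0 t (by rw [h0, zero_mul])
  have hB0 : ∀ t : ℕ, aeval (b ^ d ^ t) B ≠ 0 := fun t h0 => hAB0 t (by rw [h0, mul_zero])
  have hβ : (0:ℝ) < |(B.leadingCoeff : ℝ)| := by
    rw [abs_pos]; exact_mod_cast Polynomial.leadingCoeff_ne_zero.2 hB
  have hα : (0:ℝ) < |(A.leadingCoeff : ℝ)| := by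
    rw [abs_pos]; exact_mod_cast Polynomial.leadingCoeff_ne_zero.2 hA
  have hγ : (0:ℝ) < |(q.leadingCoeff : ℝ)| := by
    rw [abs_pos]; exact_mod_cast Polynomial.leadingCoeff_ne_zero.2 hq
  obtain ⟨lB, LB, hlB, hLB, MB, hMB⟩ := prod_aeval_bounds hb hd B hB hB0
  obtain ⟨lA, LA, hlA, hLA, MA, hMA⟩ := prod_aeval_bounds hb hd A hA hA0
  obtain ⟨Mq, hMq⟩ := aeval_single_bounds hb hd q hq
  obtain ⟨hE0, MS, hMS⟩ := errS_window hc hb hbconv hd p q (e:ℤ) horder hne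
  set hE := |((errC c p q (e:ℤ) : ℚ) : ℝ)| with hEdef
  have hκ1 : (0:ℝ) < |(q.leadingCoeff : ℝ)| * |b| ^ (-(B.natDegree:ℝ) / ((d:ℝ) - 1)) :=
    mul_pos hγ (Real.rpow_pos_of_pos hb0 _)
  have hκ2 : (0:ℝ) < |b| ^ (-(A.natDegree:ℝ) / ((d:ℝ) - 1)) :=
    Real.rpow_pos_of_pos hb0 _
  refine ⟨lB * (1/2) * (|(q.leadingCoeff : ℝ)| * |b| ^ (-(B.natDegree:ℝ) / ((d:ℝ) - 1))),
    LB * 2 * (|(q.leadingCoeff : ℝ)| * |b| ^ (-(B.natDegree:ℝ) / ((d:ℝ) - 1))),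
    lA * (hE/2) * (|b| ^ (-(A.natDegree:ℝ) / ((d:ℝ) - 1))),
    LA * (2*hE) * (|b| ^ (-(A.natDegree:ℝ) / ((d:ℝ) - 1))),
    by positivity, by positivity, by positivity, by positivity,
    max (max MA MB) (max Mq MS), fun m hm => ?_⟩
  have hmA : m ≥ MA := le_trans (le_trans (le_max_left MA MB) (le_max_left _ _)) hm
  have hmB : m ≥ MB := le_trans (le_trans (le_max_right MA MB) (le_max_left _ _)) hm
  have hmq : m ≥ Mq := le_trans (le_trans (le_max_left Mq MS) (le_max_right _ _)) hm
  have hmS : m ≥ MS := le_trans (le_trans (le_max_right Mq MS) (le_max_right _ _)) hm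
  have hrpowB : (0:ℝ) < |b| ^ ((d:ℝ) ^ m * ((B.natDegree:ℝ) / ((d:ℝ) - 1) + (q.natDegree:ℝ))) :=
    Real.rpow_pos_of_pos hb0 _
  have hrpowA : (0:ℝ) < |b| ^ ((d:ℝ) ^ m * ((A.natDegree:ℝ) / ((d:ℝ) - 1) - (e:ℝ))) :=
    Real.rpow_pos_of_pos hb0 _
  have hDen1 : (0:ℝ) < |(B.leadingCoeff : ℝ)| ^ m
      * |b| ^ ((d:ℝ) ^ m * ((B.natDegree:ℝ) / ((d:ℝ) - 1) + (q.natDegree:ℝ))) := by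
    positivity
  have hDen2 : (0:ℝ) < |(A.leadingCoeff : ℝ)| ^ m
      * |b| ^ ((d:ℝ) ^ m * ((A.natDegree:ℝ) / ((d:ℝ) - 1) - (e:ℝ))) := by
    positivity
  have hprodBnn : (0:ℝ) ≤ ∏ t ∈ Finset.range m, |aeval (b ^ d ^ t) B| :=
    Finset.prod_nonneg fun t _ => abs_nonneg _
  have hprodAnn : (0:ℝ) ≤ ∏ t ∈ Finset.range m, |aeval (b ^ d ^ t) A| :=
    Finset.prod_nonneg fun t _ => abs_nonneg _
  have hiden1 : |b| ^ (∑ t ∈ Finset.range m, d ^ t * B.natDegree)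
      * |b| ^ (d ^ m * q.natDegree)
      = |b| ^ (-(B.natDegree:ℝ) / ((d:ℝ) - 1))
        * |b| ^ ((d:ℝ) ^ m * ((B.natDegree:ℝ) / ((d:ℝ) - 1) + (q.natDegree:ℝ))) :=
    rpow_exp_id1 hb0 hd B.natDegree q.natDegree m
  have hiden2 : |b| ^ (∑ t ∈ Finset.range m, d ^ t * A.natDegree)
      * (|b| ^ (d ^ m * e))⁻¹
      = |b| ^ (-(A.natDegree:ℝ) / ((d:ℝ) - 1))
        * |b| ^ ((d:ℝ) ^ m * ((A.natDegree:ℝ) / ((d:ℝ) - 1) - (e:ℝ))) :=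
    rpow_exp_id2 hb0 hd A.natDegree e m
  constructor
  · -- Claim 1
    have hnum1 : |(∏ t ∈ Finset.range m, aeval (b ^ d ^ t) B) * aeval (b ^ d ^ m) q|
        = (∏ t ∈ Finset.range m, |aeval (b ^ d ^ t) B|) * |aeval (b ^ d ^ m) q| := by
      rw [abs_mul, Finset.abs_prod]
    have hBlow := (hMB m hmB).1
    have hBup := (hMB m hmB).2
    have hqlow := (hMq m hmq).1
    have hqup := (hMq m hmq).2
    constructor
    · rw [le_div_iff₀ hDen1, hnum1]
      calc (lB * (1/2) * (|(q.leadingCoeff : ℝ)| * |b| ^ (-(B.natDegree:ℝ) / ((d:ℝ) - 1))))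
            * (|(B.leadingCoeff : ℝ)| ^ m
              * |b| ^ ((d:ℝ) ^ m * ((B.natDegree:ℝ) / ((d:ℝ) - 1) + (q.natDegree:ℝ))))
          = (lB * (|(B.leadingCoeff : ℝ)| ^ m
              * |b| ^ (∑ t ∈ Finset.range m, d ^ t * B.natDegree)))
            * (1/2 * (|(q.leadingCoeff : ℝ)| * |b| ^ (d ^ m * q.natDegree))) := by
            rw [show (lB * (|(B.leadingCoeff : ℝ)| ^ m
              * |b| ^ (∑ t ∈ Finset.range m, d ^ t * B.natDegree)))
            * (1/2 * (|(q.leadingCoeff : ℝ)| * |b| ^ (d ^ m * q.natDegree)))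
              = lB * (1/2) * |(q.leadingCoeff : ℝ)| * |(B.leadingCoeff : ℝ)| ^ m
                * (|b| ^ (∑ t ∈ Finset.range m, d ^ t * B.natDegree)
                  * |b| ^ (d ^ m * q.natDegree)) from by ring, hiden1]
            ring
        _ ≤ (∏ t ∈ Finset.range m, |aeval (b ^ d ^ t) B|) * |aeval (b ^ d ^ m) q| :=
            mul_le_mul hBlow hqlow (by positivity) hprodBnn
    · rw [div_le_iff₀ hDen1]
      rw [hnum1]
      calc (∏ t ∈ Finset.range m, |aeval (b ^ d ^ t) B|) * |aeval (b ^ d ^ m) q|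
          ≤ (LB * (|(B.leadingCoeff : ℝ)| ^ m
              * |b| ^ (∑ t ∈ Finset.range m, d ^ t * B.natDegree)))
            * (2 * (|(q.leadingCoeff : ℝ)| * |b| ^ (d ^ m * q.natDegree))) :=
            mul_le_mul hBup hqup (abs_nonneg _) (by positivity)
        _ = (LB * 2 * (|(q.leadingCoeff : ℝ)| * |b| ^ (-(B.natDegree:ℝ) / ((d:ℝ) - 1))))
            * (|(B.leadingCoeff : ℝ)| ^ m
              * |b| ^ ((d:ℝ) ^ m * ((B.natDegree:ℝ) / ((d:ℝ) - 1) + (q.natDegree:ℝ)))) := by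
            rw [show (LB * (|(B.leadingCoeff : ℝ)| ^ m
              * |b| ^ (∑ t ∈ Finset.range m, d ^ t * B.natDegree)))
            * (2 * (|(q.leadingCoeff : ℝ)| * |b| ^ (d ^ m * q.natDegree)))
              = LB * 2 * |(q.leadingCoeff : ℝ)| * |(B.leadingCoeff : ℝ)| ^ m
                * (|b| ^ (∑ t ∈ Finset.range m, d ^ t * B.natDegree)
                  * |b| ^ (d ^ m * q.natDegree)) from by ring, hiden1]
            ring
  · -- Claim 2
    have hxne : (b : ℝ) ^ d ^ m ≠ 0 := pow_ne_zero _ hbne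
    have hxin : InDiscOfConvergence c (b ^ d ^ m) :=
      indisc_iter hc hb hbconv (by positivity)
    have hiter := mahler_iter hd hfeq hc hb hbconv m
    have hexpr : (∏ t ∈ Finset.range m, aeval (b ^ d ^ t) B) * aeval (b ^ d ^ m) q
          * mahlerValue c b
        - (∏ t ∈ Finset.range m, aeval (b ^ d ^ t) A) * aeval (b ^ d ^ m) p
        = (∏ t ∈ Finset.range m, aeval (b ^ d ^ t) A)
          * (aeval (b ^ d ^ m) q * mahlerValue c (b ^ d ^ m) - aeval (b ^ d ^ m) p) := by
      linear_combination aeval (b ^ d ^ m) q * hiter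
    have herr := err_eq hxne hxin p q (e:ℤ)
    have habse : |(b ^ d ^ m : ℝ) ^ (-(e:ℤ))| = (|b| ^ (d ^ m * e))⁻¹ := by
      rw [zpow_neg, abs_inv, zpow_natCast, abs_pow, abs_pow, ← pow_mul]
    have hnum2 : |(∏ t ∈ Finset.range m, aeval (b ^ d ^ t) B) * aeval (b ^ d ^ m) q
          * mahlerValue c b
        - (∏ t ∈ Finset.range m, aeval (b ^ d ^ t) A) * aeval (b ^ d ^ m) p|
        = (∏ t ∈ Finset.range m, |aeval (b ^ d ^ t) A|)
          * ((|b| ^ (d ^ m * e))⁻¹ * |errS c p q (e:ℤ) (b ^ d ^ m)|) := by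
      rw [hexpr, abs_mul, Finset.abs_prod, herr, abs_mul, habse]
    have hSlow := (hMS m hmS).1
    have hSup := (hMS m hmS).2
    have hAlow := (hMA m hmA).1
    have hAup := (hMA m hmA).2
    constructor
    · rw [le_div_iff₀ hDen2, hnum2]
      calc (lA * (hE/2) * (|b| ^ (-(A.natDegree:ℝ) / ((d:ℝ) - 1))))
            * (|(A.leadingCoeff : ℝ)| ^ m
              * |b| ^ ((d:ℝ) ^ m * ((A.natDegree:ℝ) / ((d:ℝ) - 1) - (e:ℝ))))
          = (lA * (|(A.leadingCoeff : ℝ)| ^ m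
              * |b| ^ (∑ t ∈ Finset.range m, d ^ t * A.natDegree)))
            * ((|b| ^ (d ^ m * e))⁻¹ * (hE/2)) := by
            rw [show (lA * (|(A.leadingCoeff : ℝ)| ^ m
              * |b| ^ (∑ t ∈ Finset.range m, d ^ t * A.natDegree)))
            * ((|b| ^ (d ^ m * e))⁻¹ * (hE/2))
              = lA * (hE/2) * |(A.leadingCoeff : ℝ)| ^ m
                * (|b| ^ (∑ t ∈ Finset.range m, d ^ t * A.natDegree)
                  * (|b| ^ (d ^ m * e))⁻¹) from by ring, hiden2]
            ring
        _ ≤ (∏ t ∈ Finset.range m, |aeval (b ^ d ^ t) A|)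
            * ((|b| ^ (d ^ m * e))⁻¹ * |errS c p q (e:ℤ) (b ^ d ^ m)|) := by
            apply mul_le_mul hAlow _ (by positivity) hprodAnn
            apply mul_le_mul_of_nonneg_left hSlow (by positivity)
    · rw [div_le_iff₀ hDen2]
      rw [hnum2]
      calc (∏ t ∈ Finset.range m, |aeval (b ^ d ^ t) A|)
            * ((|b| ^ (d ^ m * e))⁻¹ * |errS c p q (e:ℤ) (b ^ d ^ m)|)
          ≤ (LA * (|(A.leadingCoeff : ℝ)| ^ m
              * |b| ^ (∑ t ∈ Finset.range m, d ^ t * A.natDegree)))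
            * ((|b| ^ (d ^ m * e))⁻¹ * (2*hE)) := by
            apply mul_le_mul hAup _ (by positivity) (by positivity)
            apply mul_le_mul_of_nonneg_left hSup (by positivity)
        _ = (LA * (2*hE) * (|b| ^ (-(A.natDegree:ℝ) / ((d:ℝ) - 1))))
            * (|(A.leadingCoeff : ℝ)| ^ m
              * |b| ^ ((d:ℝ) ^ m * ((A.natDegree:ℝ) / ((d:ℝ) - 1) - (e:ℝ)))) := by
            rw [show (LA * (|(A.leadingCoeff : ℝ)| ^ m
              * |b| ^ (∑ t ∈ Finset.range m, d ^ t * A.natDegree)))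
            * ((|b| ^ (d ^ m * e))⁻¹ * (2*hE))
              = LA * (2*hE) * |(A.leadingCoeff : ℝ)| ^ m
                * (|b| ^ (∑ t ∈ Finset.range m, d ^ t * A.natDegree)
                  * (|b| ^ (d ^ m * e))⁻¹) from by ring, hiden2]
            ring
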